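/- Let 0 < t ≤ 1, 0 < |γ| ≤ 1/6, η₂ = e^{it_h⁻} with cos t_h⁻ = (4γ+1+t²/6 - √((1+t²/6)²+4γt²))/(4γ) and t_h⁻ ∈ (0,π/2), and define b₂ = η₂ⁿ(1 - t²/3 - (1+t²/6)η₂⁻¹ + γ(1-η₂⁻¹)² - it). Then |b₂| < t²/3. -/

import Mathlib

lemma aux_ht2 (t γ s : ℝ) (hγl : -(1/6) ≤ γ) (hs0 : 0 < s) (hs1 : s < 1)
    (hrel3 : t^2*(3-s) = 6*s + 12*γ*s^2) : 2*s ≤ t^2 := by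
  have h3s : (0:ℝ) < 3 - s := by linarith
  have h1 : (0:ℝ) ≤ (t^2 - 2*s)*(3-s) := by
    have he : (t^2 - 2*s)*(3-s) = 12*γ*s^2 + 2*s^2 := by linear_combination hrel3
    rw [he]
    nlinarith [mul_nonneg (show (0:ℝ) ≤ 1/6+γ by linarith) (mul_nonneg hs0.le hs0.le)]
  have h2 : 0*(3-s) ≤ (t^2-2*s)*(3-s) := by simpa using h1
  linarith [(mul_le_mul_iff_of_pos_right h3s).mp h2]

lemma aux_xb1 (t γ s : ℝ) (hγr : γ ≤ 1/6) (hs0 : 0 < s) (hs1 : s < 1)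
    (hrel3 : t^2*(3-s) = 6*s + 12*γ*s^2) : 2*γ*s ≤ t^2/6 := by
  nlinarith [hrel3, mul_nonneg (mul_nonneg (show (0:ℝ) ≤ 1/6-γ by linarith) hs0.le) hs0.le,
    mul_pos hs0 hs0, hs0]

lemma aux_xb2 (t γ s : ℝ) (hγl : -(1/6) ≤ γ) (hs0 : 0 < s) (hs1 : s < 1)
    (hrel3 : t^2*(3-s) = 6*s + 12*γ*s^2) : -(t^2/6) ≤ 2*γ*s := by
  nlinarith [hrel3, mul_nonneg (mul_nonneg (show (0:ℝ) ≤ 1/6+γ by linarith) hs0.le) hs0.le,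
    mul_pos hs0 hs0, hs0]

lemma aux_q1 (t γ s : ℝ) (ht0 : 0 < t) (ht1 : t ≤ 1) (hγr : γ ≤ 1/6)
    (hγl : -(1/6) ≤ γ) (hs0 : 0 < s) (hs1 : s < 1) (ht2 : 2*s ≤ t^2) :
    (2-s)*(6+12*γ*s) ≤ (2+t/2)^2*(3-s) := by
  nlinarith [mul_nonneg (mul_nonneg (show (0:ℝ) ≤ 1/6-γ by linarith) hs0.le) hs0.le,
    mul_nonneg (mul_nonneg (show (0:ℝ) ≤ 1/6+γ by linarith) hs0.le) (mul_nonneg hs0.le hs0.le),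
    mul_nonneg ht0.le (show (0:ℝ) ≤ t^2 - 2*s by linarith),
    mul_nonneg hs0.le (show (0:ℝ) ≤ 1 - t by linarith),
    mul_pos hs0 ht0, mul_pos hs0 hs0,
    mul_nonneg (mul_nonneg hs0.le hs0.le) ht0.le]

lemma aux_q2 (t γ s : ℝ) (ht0 : 0 < t) (ht1 : t ≤ 1) (hγr : γ ≤ 1/6)
    (hγl : -(1/6) ≤ γ) (hs0 : 0 < s) (hs1 : s < 1) (ht2 : 2*s ≤ t^2) :
    (2-t/2)^2*(3-s) ≤ (2-s)*(6+12*γ*s) := by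
  nlinarith [mul_nonneg (mul_nonneg (show (0:ℝ) ≤ 1/6+γ by linarith) hs0.le) hs0.le,
    mul_nonneg (mul_nonneg (show (0:ℝ) ≤ 1/6+γ by linarith) hs0.le) (mul_nonneg hs0.le hs0.le),
    mul_nonneg ht0.le (show (0:ℝ) ≤ t^2 - 2*s by linarith),
    mul_nonneg hs0.le (show (0:ℝ) ≤ 1 - t by linarith),
    mul_nonneg (mul_nonneg ht0.le ht0.le) (show (0:ℝ) ≤ 1 - t by linarith),
    mul_pos hs0 ht0, mul_pos hs0 hs0]

lemma aux_D (t γ : ℝ) (hγl : -(1/6) ≤ γ) : (0:ℝ) ≤ (1 + t^2/6)^2 + 4*γ*t^2 := by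
  nlinarith [sq_nonneg (1 - t^2/6), sq_nonneg t]

lemma aux_y (t s σ y : ℝ) (ht0 : 0 < t) (hs0 : 0 < s)
    (hyid : 2*s*y = t*(t*σ - 2*s)) (hP1 : t*σ ≤ 2*s + s*t/2)
    (hP2 : 2*s - s*t/2 ≤ t*σ) : |y| ≤ t^2/4 := by
  have h2sp : (0:ℝ) < 2*s := by linarith
  rw [abs_le]
  constructor
  · have h1 : t*(2*s - s*t/2) ≤ t*(t*σ) := mul_le_mul_of_nonneg_left hP2 ht0.le
    have h2 : 2*s*(-(t^2/4)) ≤ 2*s*y := by nlinarith [h1]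
    exact le_of_mul_le_mul_left h2 h2sp
  · have h1 : t*(t*σ) ≤ t*(2*s + s*t/2) := mul_le_mul_of_nonneg_left hP1 ht0.le
    have h2 : 2*s*y ≤ 2*s*(t^2/4) := by nlinarith [h1]
    exact le_of_mul_le_mul_left h2 h2sp

lemma aux_final (t x y : ℝ) (ht0 : 0 < t) (hx : |x| ≤ t^2/6) (hy : |y| ≤ t^2/4) :
    x^2 + y^2 < (t^2/3)^2 := by
  obtain ⟨hx1, hx2⟩ := abs_le.mp hx
  obtain ⟨hy1, hy2⟩ := abs_le.mp hy
  nlinarith [pow_pos (pow_pos ht0 2) 2, sq_nonneg x, sq_nonneg y]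

lemma aux_sqle (a b : ℝ) (hb : 0 ≤ b) (h : a^2 ≤ b^2) : a ≤ b := by
  nlinarith

set_option maxHeartbeats 1000000 in
theorem b2_smallness_estimate
    (t γ th : ℝ) (n : ℕ) (ht0 : 0 < t) (ht1 : t ≤ 1)
    (hγ0 : γ ≠ 0) (hγ : |γ| ≤ 1/6)
    (hth : th ∈ Set.Ioo 0 (Real.pi/2))
    (hcos : Real.cos th = (4*γ + 1 + t^2/6
      - Real.sqrt ((1 + t^2/6)^2 + 4*γ*t^2)) / (4*γ))
    (η₂ b₂ : ℂ)
    (hη₂ : η₂ = Complex.exp ((th:ℂ)*Complex.I))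
    (hb₂ : b₂ = η₂^n * (1 - (t:ℂ)^2/3 - (1 + (t:ℂ)^2/6)*η₂⁻¹
      + (γ:ℂ)*(1 - η₂⁻¹)^2 - Complex.I*(t:ℂ))) :
    ‖b₂‖ < t^2/3 := by
  obtain ⟨hth0, hth1⟩ := hth
  obtain ⟨hγl, hγr⟩ := abs_le.mp hγ
  have hπ := Real.pi_pos
  have hc0 : 0 < Real.cos th := Real.cos_pos_of_mem_Ioo ⟨by linarith, hth1⟩
  have hσ0 : 0 < Real.sin th := Real.sin_pos_of_pos_of_lt_pi hth0 (by linarith)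
  have hc1 : Real.cos th < 1 := by
    have h := Real.cos_lt_cos_of_nonneg_of_le_pi (le_refl 0) (by linarith) hth0
    simpa using h
  obtain ⟨s, hsdef⟩ : ∃ s : ℝ, s = 1 - Real.cos th := ⟨_, rfl⟩
  obtain ⟨σ, hσde⟩ : ∃ σ : ℝ, σ = Real.sin th := ⟨_, rfl⟩
  have hcs : Real.cos th = 1 - s := by linarith
  have hs0 : 0 < s := by linarith
  have hs1 : s < 1 := by linarith
  have hσp : 0 < σ := by linarith
  have hσ2 : σ^2 = 2*s - s^2 := by
    have h := Real.sin_sq_add_cos_sq th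
    rw [hcs, ← hσde] at h; linear_combination h
  -- dispersion relation
  have h4γ : (4:ℝ)*γ ≠ 0 := by
    intro h; exact hγ0 (by linarith)
  have hD0 : (0:ℝ) ≤ (1 + t^2/6)^2 + 4*γ*t^2 := aux_D t γ hγl
  have hsq : Real.sqrt ((1 + t^2/6)^2 + 4*γ*t^2) ^ 2 = (1 + t^2/6)^2 + 4*γ*t^2 :=
    Real.sq_sqrt hD0
  have hsqrt : Real.sqrt ((1 + t^2/6)^2 + 4*γ*t^2)
      = 4*γ + 1 + t^2/6 - 4*γ*(1 - s) := by
    have h := congrArg (· * (4*γ)) hcos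
    simp only [div_mul_cancel₀ _ h4γ] at h
    rw [hcs] at h
    linarith
  have hkey : 4*γ*(2*s + s*t^2/3 + 4*γ*s^2 - t^2) = 0 := by
    rw [hsqrt] at hsq
    linear_combination hsq
  have hrel : t^2 = 2*s + s*t^2/3 + 4*γ*s^2 := by
    rcases mul_eq_zero.mp hkey with h | h
    · exact absurd (by linarith : γ = 0) hγ0
    · linarith
  have hrel3 : t^2*(3-s) = 6*s + 12*γ*s^2 := by linarith
  have h3s : (0:ℝ) < 3 - s := by linarith
  have ht2 : 2*s ≤ t^2 := aux_ht2 t γ s hγl hs0 hs1 hrel3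
  -- real part bound : |2γs| ≤ t²/6
  have hxb1 : 2*γ*s ≤ t^2/6 := aux_xb1 t γ s hγr hs0 hs1 hrel3
  have hxb2 : -(t^2/6) ≤ 2*γ*s := aux_xb2 t γ s hγl hs0 hs1 hrel3
  -- imaginary part bounds
  have hq1 := aux_q1 t γ s ht0 ht1 hγr hγl hs0 hs1 ht2
  have hq2 := aux_q2 t γ s ht0 ht1 hγr hγl hs0 hs1 ht2
  have heq : (t*σ)^2*(3-s) = s^2*((2-s)*(6+12*γ*s)) := by
    linear_combination σ^2 * hrel3 + (6*s + 12*γ*s^2) * hσ2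
  have hpoly1 : (t*σ)^2 ≤ (2*s + s*t/2)^2 := by
    have h4 : (t*σ)^2*(3-s) ≤ (2*s + s*t/2)^2*(3-s) := by
      have h5 := mul_le_mul_of_nonneg_left hq1 (sq_nonneg s)
      rw [heq]
      calc s^2*((2-s)*(6+12*γ*s)) ≤ s^2*((2+t/2)^2*(3-s)) := h5
        _ = (2*s + s*t/2)^2*(3-s) := by ring
    exact (mul_le_mul_iff_of_pos_right h3s).mp h4
  have hpoly2 : (2*s - s*t/2)^2 ≤ (t*σ)^2 := by
    have h4 : (2*s - s*t/2)^2*(3-s) ≤ (t*σ)^2*(3-s) := by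
      have h5 := mul_le_mul_of_nonneg_left hq2 (sq_nonneg s)
      rw [heq]
      calc (2*s - s*t/2)^2*(3-s) = s^2*((2-t/2)^2*(3-s)) := by ring
        _ ≤ s^2*((2-s)*(6+12*γ*s)) := h5
    exact (mul_le_mul_iff_of_pos_right h3s).mp h4
  have hP1 : t*σ ≤ 2*s + s*t/2 :=
    aux_sqle _ _ (by have := mul_pos hs0 ht0; linarith) hpoly1
  have hP2 : 2*s - s*t/2 ≤ t*σ :=
    aux_sqle _ _ (mul_pos ht0 hσp).le hpoly2
  -- the real and imaginary parts
  obtain ⟨x, hxdef⟩ : ∃ x : ℝ, x = 1 - t^2/3 - (1 + t^2/6)*(1-s) + γ*(s^2 - σ^2) := ⟨_, rfl⟩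
  obtain ⟨y, hydef⟩ : ∃ y : ℝ, y = (1 + t^2/6)*σ + 2*γ*s*σ - t := ⟨_, rfl⟩
  have hx : x = -(2*γ*s) := by
    rw [hxdef]; linear_combination (-γ) * hσ2 - (1/2) * hrel
  have h2s : 2*s*(1 + t^2/6 + 2*γ*s) = t^2 := by linarith
  have hyid : 2*s*y = t*(t*σ - 2*s) := by
    rw [hydef]; linear_combination σ * h2s
  have hyabs : |y| ≤ t^2/4 := aux_y t s σ y ht0 hs0 hyid hP1 hP2
  -- complex computation
  have hinv : η₂⁻¹ = ((1 - s : ℝ):ℂ) - (σ:ℂ)*Complex.I := by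
    rw [hη₂, ← Complex.exp_neg]
    have h1 : -((th:ℂ)*Complex.I) = ((-th : ℝ):ℂ)*Complex.I := by push_cast; ring
    rw [h1, Complex.exp_mul_I, ← Complex.ofReal_cos, ← Complex.ofReal_sin,
      Real.cos_neg, Real.sin_neg, hcs, ← hσde]
    push_cast; ring
  have hw : (1 - (t:ℂ)^2/3 - (1 + (t:ℂ)^2/6)*η₂⁻¹ + (γ:ℂ)*(1 - η₂⁻¹)^2 - Complex.I*(t:ℂ))
      = (x:ℝ) + (y:ℝ)*Complex.I := by
    rw [hinv, hxdef, hydef]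
    push_cast
    linear_combination (γ:ℂ)*(σ:ℂ)^2 * Complex.I_sq
  have hn1 : ‖η₂‖ = 1 := by
    rw [hη₂, Complex.norm_exp]
    simp
  have hnb : ‖b₂‖ = Real.sqrt (x^2 + y^2) := by
    rw [hb₂, norm_mul, norm_pow, hn1, one_pow, one_mul, hw,
      Complex.norm_def, Complex.normSq_add_mul_I]
  rw [hnb, Real.sqrt_lt' (by positivity)]
  have hxabs : |x| ≤ t^2/6 := by
    rw [hx, abs_le]; constructor <;> linarith
  exact aux_final t x y ht0 hxabs hyabs
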